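/- arXiv:2409.06007 — 2 statements merged into one kernel-verified Lean document; each statement's English description precedes it below -/
import Mathlib

section
/- Let M be a real symmetric positive semidefinite N×N matrix, Y ∈ ℝ^N a unit vector, τ ≥ 0, and z ∈ ℂ with η = Im z > 0. Set G(z) = (M − zI)^{-1}, A = 1 + τ(G(z)Y,Y), B = τ(G(z)²Y,Y). Then |A| ≥ |Im A| ≥ η |B|, and consequently the rank-one perturbation of the resolvent trace satisfies |Tr(M − zI)^{-1} − Tr(M − τ Y Y^T − zI)^{-1}| ≤ 1/η. -/
open MeasureTheory Matrix Filter
open scoped Topology ENNReal NNReal BigOperators ComplexConjugate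

noncomputable section

/-- `μ` is the uniform (rotation-invariant) probability distribution on the unit
sphere `S^{n-1} ⊂ ℝ^n`. -/
def IsUniformOnSphere (n : ℕ) (μ : Measure (Fin n → ℝ)) : Prop :=
  IsProbabilityMeasure μ ∧
    μ {x : Fin n → ℝ | ∑ i, x i ^ 2 = 1}ᶜ = 0 ∧
    ∀ O : Matrix (Fin n) (Fin n) ℝ, O * Oᵀ = 1 →
      Measure.map O.mulVec μ = μ

/-- Sample space carrying the `2m` independent sphere vectors. -/
abbrev Samp (n m : ℕ) := Fin m × Fin 2 → Fin n → ℝ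

/-- Joint distribution of the `2m` independent uniform sphere vectors. -/
def samp (n m : ℕ) (μ : Measure (Fin n → ℝ)) : Measure (Samp n m) :=
  Measure.pi fun _ => μ

/-- The tensor product vector `Y_α = y_α^{(1)} ⊗ y_α^{(2)} ∈ ℝ^{n²}`. -/
def tvec {n m : ℕ} (ω : Samp n m) (α : Fin m) : Fin n × Fin n → ℝ :=
  fun p => ω (α, 0) p.1 * ω (α, 1) p.2

/-- The sample covariance matrix `M_n = ∑_α τ_α Y_α Y_α^T`. -/
def covMat {n m : ℕ} (τ : Fin m → ℝ) (ω : Samp n m) :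
    Matrix (Fin n × Fin n) (Fin n × Fin n) ℝ :=
  ∑ α, τ α • vecMulVec (tvec ω α) (tvec ω α)

/-- `M_n^α = M_n − τ_α Y_α Y_α^T`. -/
def covMatα {n m : ℕ} (τ : Fin m → ℝ) (α : Fin m) (ω : Samp n m) :
    Matrix (Fin n × Fin n) (Fin n × Fin n) ℝ :=
  covMat τ ω - τ α • vecMulVec (tvec ω α) (tvec ω α)

/-- The resolvent `(M − zI)⁻¹` of a real matrix, as a complex matrix. -/
def resolv {I : Type*} [Fintype I] [DecidableEq I] (M : Matrix I I ℝ) (z : ℂ) :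
    Matrix I I ℂ :=
  (M.map (fun a => (a : ℂ)) - z • (1 : Matrix I I ℂ))⁻¹

/-- The quadratic form `(HY, Y)` for a real vector `Y`. -/
def qf {I : Type*} [Fintype I] (H : Matrix I I ℂ) (Y : I → ℝ) : ℂ :=
  ∑ i, ∑ j, H i j * (Y j : ℂ) * (Y i : ℂ)

/-- `γ_n(z) = Tr (M_n − zI)⁻¹`. -/
def gam {n m : ℕ} (τ : Fin m → ℝ) (z : ℂ) (ω : Samp n m) : ℂ :=
  (resolv (covMat τ ω) z).trace

/-- `γ_n^α(z) = Tr (M_n^α − zI)⁻¹`. -/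
def gamα {n m : ℕ} (τ : Fin m → ℝ) (α : Fin m) (z : ℂ) (ω : Samp n m) : ℂ :=
  (resolv (covMatα τ α ω) z).trace

/-- `A_α(z) = 1 + τ_α (G^α(z) Y_α, Y_α)`. -/
def Afun {n m : ℕ} (τ : Fin m → ℝ) (α : Fin m) (z : ℂ) (ω : Samp n m) : ℂ :=
  1 + (τ α : ℂ) * qf (resolv (covMatα τ α ω) z) (tvec ω α)

/-- `B_α(z) = τ_α (G^α(z)² Y_α, Y_α)`. -/
def Bfun {n m : ℕ} (τ : Fin m → ℝ) (α : Fin m) (z : ℂ) (ω : Samp n m) : ℂ :=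
  (τ α : ℂ) * qf (resolv (covMatα τ α ω) z * resolv (covMatα τ α ω) z) (tvec ω α)

/-- Expectation of a complex random variable. -/
def expec {Ω : Type*} [MeasurableSpace Ω] (P : Measure Ω) (f : Ω → ℂ) : ℂ :=
  ∫ ω, f ω ∂P

/-- Variance `V ξ = E|ξ − Eξ|²` of a complex random variable. -/
def cvar {Ω : Type*} [MeasurableSpace Ω] (P : Measure Ω) (f : Ω → ℂ) : ℝ :=
  ∫ ω, ‖f ω - expec P f‖ ^ 2 ∂P

/-- `p`-th absolute central moment `E|ξ − Eξ|^p`. -/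
def cmom {Ω : Type*} [MeasurableSpace Ω] (P : Measure Ω) (f : Ω → ℂ) (p : ℕ) : ℝ :=
  ∫ ω, ‖f ω - expec P f‖ ^ p ∂P

/-- Covariance `Cov{ξ, η} = E (ξ − Eξ)(η − Eη)`. -/
def ccov {Ω : Type*} [MeasurableSpace Ω] (P : Measure Ω) (f g : Ω → ℂ) : ℂ :=
  ∫ ω, (f ω - expec P f) * (g ω - expec P g) ∂P

/-- Resampling the `α`-th pair of sphere vectors. -/
def replα {n m : ℕ} (α : Fin m) (ω : Samp n m) (v : Fin 2 → Fin n → ℝ) : Samp n m :=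
  fun i => if i.1 = α then v i.2 else ω i

/-- Conditional expectation `E_α` (expectation with respect to `Y_α` only). -/
def expecα {n m : ℕ} (μ : Measure (Fin n → ℝ)) (α : Fin m)
    (f : Samp n m → ℂ) (ω : Samp n m) : ℂ :=
  ∫ v, f (replα α ω v) ∂(Measure.pi fun _ : Fin 2 => μ)

/-- Conditional variance `V_α ξ = E_α |ξ − E_α ξ|²`. -/
def cvarα {n m : ℕ} (μ : Measure (Fin n → ℝ)) (α : Fin m)
    (f : Samp n m → ℂ) (ω : Samp n m) : ℝ :=
  ∫ v, ‖f (replα α ω v) - expecα μ α f ω‖ ^ 2 ∂(Measure.pi fun _ : Fin 2 => μ)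

/-- Conditional `p`-th absolute central moment `E_α |ξ − E_α ξ|^p`. -/
def cmomα {n m : ℕ} (μ : Measure (Fin n → ℝ)) (α : Fin m)
    (f : Samp n m → ℂ) (p : ℕ) (ω : Samp n m) : ℝ :=
  ∫ v, ‖f (replα α ω v) - expecα μ α f ω‖ ^ p ∂(Measure.pi fun _ : Fin 2 => μ)

/-- Condition A(ii): the normalized counting measure `σ_n` of the `τ_α`'s converges
weakly to the probability measure `σ` on `[0,T]`, with rate `C n⁻² sup|φ|`. -/
def ConditionAii (T : ℝ) (m : ℕ → ℕ) (τ : (n : ℕ) → Fin (m n) → ℝ)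
    (σ : Measure ℝ) (Cσ : ℝ) : Prop :=
  IsProbabilityMeasure σ ∧ σ (Set.Icc (0 : ℝ) T)ᶜ = 0 ∧
    ∀ n : ℕ, 1 ≤ n → ∀ φ : BoundedContinuousFunction ℝ ℝ,
      |(m n : ℝ)⁻¹ * ∑ α, φ (τ n α) - ∫ t, φ t ∂σ| ≤ Cσ / (n : ℝ) ^ 2 * ‖φ‖

/-- `f` is the Stieltjes transform of the limiting spectral distribution: it is analytic
off the real axis, maps each half-plane to itself, and solves the functional equation
`z f(z) = −1 + c − ∫ c dσ(τ)/(1 + τ f(z))`. -/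
def IsStieltjesLimit (c : ℝ) (σ : Measure ℝ) (f : ℂ → ℂ) : Prop :=
  DifferentiableOn ℂ f {z : ℂ | z.im ≠ 0} ∧
    (∀ z : ℂ, z.im ≠ 0 → 0 ≤ (f z).im * z.im) ∧
    ∀ z : ℂ, z.im ≠ 0 →
      z * f z = -1 + (c : ℂ) - ∫ t, (c : ℂ) / (1 + (t : ℂ) * f z) ∂σ

namespace RankOneAux

variable {N : ℕ}

lemma real_sym_quad (M : Matrix (Fin N) (Fin N) ℝ) (hM : Mᵀ = M) (v : Fin N → ℂ) :
    (∑ i, ∑ j, (M i j : ℂ) * conj (v i) * v j).im = 0 := by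
  have hsym : ∀ i j, M j i = M i j := fun i j =>
    (Matrix.transpose_apply M i j).symm.trans (congrFun (congrFun hM i) j)
  rw [← Complex.conj_eq_iff_im]
  calc conj (∑ i, ∑ j, (M i j : ℂ) * conj (v i) * v j)
      = ∑ i, ∑ j, (M i j : ℂ) * v i * conj (v j) := by
        simp [map_sum, _root_.map_mul, Complex.conj_ofReal]
    _ = ∑ j, ∑ i, (M i j : ℂ) * v i * conj (v j) := Finset.sum_comm
    _ = ∑ i, ∑ j, (M i j : ℂ) * conj (v i) * v j := by
        refine Finset.sum_congr rfl fun i _ => Finset.sum_congr rfl fun j _ => ?_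
        rw [hsym i j]; ring

/-- master expansion : imaginary part of star v ⬝ (M - z) v -/
lemma master (M : Matrix (Fin N) (Fin N) ℝ) (hM : Mᵀ = M) (z : ℂ) (v : Fin N → ℂ) :
    (∑ i, conj (v i) * ((M.map (fun a => (a : ℂ)) - z • 1).mulVec v) i).im
      = - z.im * ∑ i, Complex.normSq (v i) := by
  have expand : (∑ i, conj (v i) * ((M.map (fun a => (a : ℂ)) - z • 1).mulVec v) i)
      = (∑ i, ∑ j, (M i j : ℂ) * conj (v i) * v j)
        - z * ((∑ i, Complex.normSq (v i) : ℝ) : ℂ) := by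
    simp only [Matrix.mulVec, dotProduct, Matrix.sub_apply, Matrix.map_apply,
      Matrix.smul_apply, Matrix.one_apply, smul_eq_mul, ite_mul, zero_mul,
      Finset.sum_ite_eq, Finset.mem_univ, if_true]
    push_cast
    rw [Finset.mul_sum, ← Finset.sum_sub_distrib]
    refine Finset.sum_congr rfl fun i _ => ?_
    have h1 : (∑ x, (((M i x : ℂ)) - z * if i = x then 1 else 0) * v x)
        = (∑ j, (M i j : ℂ) * v j) - z * v i := by
      simp [sub_mul, Finset.sum_sub_distrib, ite_mul, mul_ite, Finset.sum_ite_eq, mul_assoc]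
    rw [h1, mul_sub, Finset.mul_sum, Complex.normSq_eq_conj_mul_self]
    congr 1
    · exact Finset.sum_congr rfl fun j _ => by ring
    · ring
  rw [expand]
  simp [real_sym_quad M hM v, Complex.sub_im, Complex.mul_im]

lemma isUnit_shift (M : Matrix (Fin N) (Fin N) ℝ) (hM : Mᵀ = M) (z : ℂ) (hz : z.im ≠ 0) :
    IsUnit (M.map (fun a => (a : ℂ)) - z • 1) := by
  rw [← Matrix.mulVec_injective_iff_isUnit]
  set S := M.map (fun a => (a : ℂ)) - z • 1 with hS
  have hker : ∀ v, S.mulVec v = 0 → v = 0 := by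
    intro v hv
    have h0 : (∑ i, conj (v i) * (S.mulVec v) i).im = 0 := by rw [hv]; simp
    rw [master M hM z v] at h0
    have hsum : ∑ i, Complex.normSq (v i) = 0 := by
      rcases mul_eq_zero.mp h0 with h | h
      · exact absurd (neg_eq_zero.mp h) hz
      · exact h
    funext i
    have := (Finset.sum_eq_zero_iff_of_nonneg (fun j _ => Complex.normSq_nonneg (v j))).mp
      hsum i (Finset.mem_univ i)
    simpa using Complex.normSq_eq_zero.mp this
  intro a b hab
  have : S.mulVec (a - b) = 0 := by
    rw [Matrix.mulVec_sub, hab, sub_self]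
  have := hker _ this
  exact sub_eq_zero.mp this


lemma shift_mul_resolv (M : Matrix (Fin N) (Fin N) ℝ) (hM : Mᵀ = M) (z : ℂ) (hz : z.im ≠ 0) :
    (M.map (fun a => (a : ℂ)) - z • 1) * resolv M z = 1 :=
  Matrix.mul_nonsing_inv _ ((Matrix.isUnit_iff_isUnit_det _).mp (isUnit_shift M hM z hz))

lemma resolv_transpose (M : Matrix (Fin N) (Fin N) ℝ) (hM : Mᵀ = M) (z : ℂ) :
    (resolv M z)ᵀ = resolv M z := by
  unfold resolv
  rw [Matrix.transpose_nonsing_inv]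
  congr 1
  rw [Matrix.transpose_sub, Matrix.transpose_smul, Matrix.transpose_one, ← Matrix.transpose_map,
    hM]

lemma qf_eq_dot {I : Type*} [Fintype I] (H : Matrix I I ℂ) (Y : I → ℝ) :
    qf H Y = (fun i => (Y i : ℂ)) ⬝ᵥ H.mulVec (fun i => (Y i : ℂ)) := by
  simp only [qf, dotProduct, Matrix.mulVec, Finset.mul_sum]
  refine Finset.sum_congr rfl fun i _ => Finset.sum_congr rfl fun j _ => by ring

lemma qf_im (M : Matrix (Fin N) (Fin N) ℝ) (hM : Mᵀ = M) (z : ℂ) (hz : z.im ≠ 0)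
    (Y : Fin N → ℝ) :
    (qf (resolv M z) Y).im
      = z.im * ∑ i, Complex.normSq ((resolv M z).mulVec (fun i => (Y i : ℂ)) i) := by
  set S := M.map (fun a => (a : ℂ)) - z • 1 with hSdef
  set v := (resolv M z).mulVec (fun i => (Y i : ℂ)) with hvdef
  have hv : (fun i => (Y i : ℂ)) = S.mulVec v := by
    rw [hvdef, Matrix.mulVec_mulVec, shift_mul_resolv M hM z hz, Matrix.one_mulVec]
  have hconj : conj (qf (resolv M z) Y) = ∑ i, conj (v i) * (S.mulVec v) i := by
    rw [qf_eq_dot]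
    simp only [dotProduct, map_sum, _root_.map_mul, Complex.conj_ofReal]
    refine Finset.sum_congr rfl fun i _ => ?_
    rw [congrFun hv i]
    ring
  have him : (∑ i, conj (v i) * (S.mulVec v) i).im
      = - z.im * ∑ i, Complex.normSq (v i) := by
    rw [hSdef]; exact master M hM z v
  have hmain : (qf (resolv M z) Y).im = - (conj (qf (resolv M z) Y)).im := by
    simp [Complex.conj_im]
  rw [hmain, hconj, him]
  ring

lemma qf_sq (M : Matrix (Fin N) (Fin N) ℝ) (hM : Mᵀ = M) (z : ℂ) (Y : Fin N → ℝ) :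
    qf (resolv M z * resolv M z) Y
      = ∑ i, ((resolv M z).mulVec (fun i => (Y i : ℂ)) i) ^ 2 := by
  set v := (resolv M z).mulVec (fun i => (Y i : ℂ)) with hvdef
  have h1 : (fun i => (Y i : ℂ)) ᵥ* resolv M z = v := by
    rw [← resolv_transpose M hM z, Matrix.vecMul_transpose]
  rw [qf_eq_dot, ← Matrix.mulVec_mulVec, Matrix.dotProduct_mulVec, h1]
  simp [dotProduct, sq, ← hvdef]

/-- `η ‖B‖ ≤ |Im A|`. -/
lemma im_bound (M : Matrix (Fin N) (Fin N) ℝ) (hM : Mᵀ = M) (z : ℂ) (hz : 0 < z.im)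
    (t : ℝ) (ht : 0 ≤ t) (Y : Fin N → ℝ) :
    z.im * ‖(t : ℂ) * qf (resolv M z * resolv M z) Y‖
      ≤ |(1 + (t : ℂ) * qf (resolv M z) Y).im| := by
  set v := (resolv M z).mulVec (fun i => (Y i : ℂ)) with hvdef
  set r := ∑ i, Complex.normSq (v i) with hrdef
  have hr0 : 0 ≤ r := Finset.sum_nonneg fun i _ => Complex.normSq_nonneg _
  have hA : (1 + (t : ℂ) * qf (resolv M z) Y).im = t * (z.im * r) := by
    simp [Complex.add_im, Complex.mul_im, qf_im M hM z hz.ne' Y, hrdef, hvdef]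
  have hq2 : ‖qf (resolv M z * resolv M z) Y‖ ≤ r := by
    rw [qf_sq M hM z Y, hrdef]
    refine (norm_sum_le _ _).trans (le_of_eq (Finset.sum_congr rfl fun i _ => ?_))
    rw [sq, norm_mul, Complex.norm_mul_self_eq_normSq]
  have hnorm : ‖(t : ℂ) * qf (resolv M z * resolv M z) Y‖ ≤ t * r := by
    rw [norm_mul, Complex.norm_real, Real.norm_eq_abs, abs_of_nonneg ht]
    exact mul_le_mul_of_nonneg_left hq2 ht
  have : z.im * ‖(t : ℂ) * qf (resolv M z * resolv M z) Y‖ ≤ z.im * (t * r) :=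
    mul_le_mul_of_nonneg_left hnorm hz.le
  rw [hA, abs_of_nonneg (by positivity)]
  linarith

lemma one_add_ne (M : Matrix (Fin N) (Fin N) ℝ) (hM : Mᵀ = M) (z : ℂ) (hz : 0 < z.im)
    (t : ℝ) (ht : 0 ≤ t) (Y : Fin N → ℝ) :
    1 + (t : ℂ) * qf (resolv M z) Y ≠ 0 := by
  intro h
  set v := (resolv M z).mulVec (fun i => (Y i : ℂ)) with hvdef
  have him : (1 + (t : ℂ) * qf (resolv M z) Y).im = 0 := by rw [h]; simp
  have hA : (1 + (t : ℂ) * qf (resolv M z) Y).im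
      = t * (z.im * ∑ i, Complex.normSq (v i)) := by
    simp [Complex.add_im, Complex.mul_im, qf_im M hM z hz.ne' Y, hvdef]
  rw [hA] at him
  rcases mul_eq_zero.mp him with ht0 | hr0
  · rw [ht0] at h
    simp at h
  · have hr : ∑ i, Complex.normSq (v i) = 0 := by
      rcases mul_eq_zero.mp hr0 with h' | h'
      · exact absurd h' hz.ne'
      · exact h'
    have hv0 : v = 0 := by
      funext i
      have := (Finset.sum_eq_zero_iff_of_nonneg
        (fun j _ => Complex.normSq_nonneg (v j))).mp hr i (Finset.mem_univ i)
      simpa using Complex.normSq_eq_zero.mp this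
    have hq : qf (resolv M z) Y = 0 := by
      rw [qf_eq_dot, ← hvdef, hv0, dotProduct_zero]
    rw [hq, mul_zero, add_zero] at h
    exact one_ne_zero h

lemma vecMulVec_mul_vecMulVec (Y : Fin N → ℝ) (H : Matrix (Fin N) (Fin N) ℂ) :
    vecMulVec (fun i => (Y i : ℂ)) (fun i => (Y i : ℂ)) * H
        * vecMulVec (fun i => (Y i : ℂ)) (fun i => (Y i : ℂ))
      = qf H Y • vecMulVec (fun i => (Y i : ℂ)) (fun i => (Y i : ℂ)) := by
  ext i j
  simp only [Matrix.mul_apply, Matrix.vecMulVec_apply, Matrix.smul_apply, smul_eq_mul, qf]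
  calc ∑ k, (∑ l, (Y i : ℂ) * (Y l : ℂ) * H l k) * ((Y k : ℂ) * (Y j : ℂ))
      = ∑ k, ∑ l, H l k * (Y k : ℂ) * (Y l : ℂ) * ((Y i : ℂ) * (Y j : ℂ)) := by
        refine Finset.sum_congr rfl fun k _ => ?_
        rw [Finset.sum_mul]
        exact Finset.sum_congr rfl fun l _ => by ring
    _ = ∑ l, ∑ k, H l k * (Y k : ℂ) * (Y l : ℂ) * ((Y i : ℂ) * (Y j : ℂ)) :=
        Finset.sum_comm
    _ = (∑ l, ∑ k, H l k * (Y k : ℂ) * (Y l : ℂ)) * ((Y i : ℂ) * (Y j : ℂ)) := by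
        rw [Finset.sum_mul]
        exact Finset.sum_congr rfl fun l _ => by rw [Finset.sum_mul]

lemma trace_mul_vecMulVec (Y : Fin N → ℝ) (H : Matrix (Fin N) (Fin N) ℂ) :
    (H * vecMulVec (fun i => (Y i : ℂ)) (fun i => (Y i : ℂ))).trace = qf H Y := by
  simp only [Matrix.trace, Matrix.diag_apply, Matrix.mul_apply, Matrix.vecMulVec_apply, qf]
  refine Finset.sum_congr rfl fun i _ => Finset.sum_congr rfl fun j _ => by ring


end RankOneAux

/-- (2.10)–(2.11): `|A| ≥ |Im A| ≥ η|B|`, and the rank-one perturbation bound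
`|Tr(M−zI)⁻¹ − Tr(M−τYYᵀ−zI)⁻¹| ≤ 1/η`. -/
theorem rank_one_perturbation_bound (N : ℕ) (M : Matrix (Fin N) (Fin N) ℝ)
    (hM : M.PosSemidef) (Y : Fin N → ℝ) (hY : ∑ i, Y i ^ 2 = 1)
    (t : ℝ) (ht : 0 ≤ t) (z : ℂ) (hz : 0 < z.im) :
    |(1 + (t : ℂ) * qf (resolv M z) Y).im| ≤ ‖1 + (t : ℂ) * qf (resolv M z) Y‖ ∧
    z.im * ‖(t : ℂ) * qf (resolv M z * resolv M z) Y‖ ≤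
      |(1 + (t : ℂ) * qf (resolv M z) Y).im| ∧
    ‖(resolv M z).trace - (resolv (M - t • vecMulVec Y Y) z).trace‖ ≤ 1 / z.im := by
  have hMs : Mᵀ = M := by
    ext i j
    simpa [Matrix.conjTranspose_apply] using congrFun (congrFun hM.1.eq i) j
  refine ⟨Complex.abs_im_le_norm _, RankOneAux.im_bound M hMs z hz t ht Y, ?_⟩
  -- rank-one perturbation bound
  set Mt := M - t • vecMulVec Y Y with hMtdef
  have hMts : Mtᵀ = Mt := by
    rw [hMtdef, Matrix.transpose_sub, Matrix.transpose_smul, hMs]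
    congr 1
    ext i j
    simp [Matrix.vecMulVec_apply, mul_comm]
  set Yc : Fin N → ℂ := fun i => (Y i : ℂ) with hYc
  set V := vecMulVec Yc Yc with hV
  set G := resolv Mt z with hG
  set q := qf G Y with hq
  set A := 1 + (t : ℂ) * q with hA
  have hAne : A ≠ 0 := RankOneAux.one_add_ne Mt hMts z hz t ht Y
  have hmap : M.map (fun a => (a : ℂ)) - z • 1
      = (Mt.map (fun a => (a : ℂ)) - z • 1) + (t : ℂ) • V := by
    rw [sub_add_eq_add_sub]
    congr 1
    ext i j
    simp only [Matrix.map_apply, Matrix.add_apply, Matrix.smul_apply, Matrix.sub_apply,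
      Matrix.vecMulVec_apply, smul_eq_mul, hMtdef, hV, hYc]
    push_cast
    ring
  have hSG : (Mt.map (fun a => (a : ℂ)) - z • 1) * G = 1 :=
    RankOneAux.shift_mul_resolv Mt hMts z hz.ne'
  have h2 : (Mt.map (fun a => (a : ℂ)) - z • 1) * (G * (V * G)) = V * G := by
    rw [← Matrix.mul_assoc, hSG, Matrix.one_mul]
  have h3 : V * (G * (V * G)) = q • (V * G) := by
    rw [← Matrix.mul_assoc, ← Matrix.mul_assoc, hV, RankOneAux.vecMulVec_mul_vecMulVec, ← hq,
      Matrix.smul_mul]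
  have key : (M.map (fun a => (a : ℂ)) - z • 1) * (G - ((t : ℂ) / A) • (G * (V * G))) = 1 := by
    rw [hmap]
    simp only [add_mul, Matrix.mul_sub, Matrix.smul_mul, Matrix.mul_smul, hSG, h2, h3,
      smul_smul]
    match_scalars <;> field_simp <;> (try rw [hA]) <;> ring
  have hres : resolv M z = G - ((t : ℂ) / A) • (G * (V * G)) := by
    unfold resolv
    exact Matrix.inv_eq_right_inv key
  have htr : (G * (V * G)).trace = qf (G * G) Y := by
    rw [← Matrix.mul_assoc, Matrix.trace_mul_comm, ← Matrix.mul_assoc, hV,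
      RankOneAux.trace_mul_vecMulVec]
  have hdiff : (resolv M z).trace - (resolv Mt z).trace
      = -(((t : ℂ) * qf (G * G) Y) / A) := by
    rw [hres, Matrix.trace_sub, Matrix.trace_smul, htr, ← hG, smul_eq_mul]
    ring
  rw [hdiff, norm_neg, norm_div]
  rw [div_le_div_iff₀ (norm_pos_iff.mpr hAne) hz]
  have hb := RankOneAux.im_bound Mt hMts z hz t ht Y
  have hab : |(1 + (t : ℂ) * qf (resolv Mt z) Y).im| ≤ ‖1 + (t : ℂ) * qf (resolv Mt z) Y‖ :=
    Complex.abs_im_le_norm _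
  rw [← hG, ← hq, ← hA] at hb hab
  nlinarith [norm_nonneg ((t : ℂ) * qf (G * G) Y)]
end
end

section
/- Let f be the unique solution, in the class of functions analytic on ℂ∖ℝ with Im f(z)·Im z ≥ 0, of z f(z) = −1 + c − ∫ c dσ(τ)/(1 + τ f(z)), where σ is a probability measure on [0,T] and c > 0, and let η0 = 2T(c+1). Then for all z, z1, z2 ∈ C_{η0} with z1 ≠ z2: (i) ( ∫ c τ dσ(τ)/(1 + τ f(z))² − z )^{-1} = f'(z)/f(z); (ii) (z1 − z2)/(f(z1) − f(z2)) = 1/(f(z1) f(z2)) − ∫ c τ² dσ(τ)/((1 + τ f(z1))(1 + τ f(z2))). -/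
open MeasureTheory Matrix Filter
open scoped Topology ENNReal NNReal BigOperators ComplexConjugate

noncomputable section

lemma aux_restrict {T : ℝ} {σ : Measure ℝ} (hσs : σ (Set.Icc (0 : ℝ) T)ᶜ = 0) :
    σ.restrict (Set.Icc (0:ℝ) T) = σ :=
  Measure.restrict_eq_self_of_ae_mem (by rwa [Filter.eventually_iff, mem_ae_iff])

lemma aux_integrable {T : ℝ} {σ : Measure ℝ} [IsFiniteMeasure σ]
    (hσs : σ (Set.Icc (0 : ℝ) T)ᶜ = 0) {g : ℝ → ℂ} (hg : Continuous g) :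
    Integrable g σ := by
  rw [← aux_restrict hσs]
  exact (hg.continuousOn).integrableOn_compact isCompact_Icc

lemma denom_ne_zero {w : ℂ} (hw : 0 < w.im) (τ : ℝ) : 1 + (τ : ℂ) * w ≠ 0 := by
  rcases eq_or_ne τ 0 with h | h
  · simp [h]
  · intro hc
    have : (1 + (τ : ℂ) * w).im = τ * w.im := by simp
    rw [hc] at this
    simp only [Complex.zero_im] at this
    exact h (by
      have := this.symm
      rcases mul_eq_zero.mp this with h1 | h1
      · exact h1
      · exact absurd h1 hw.ne')

lemma cont_denom {w : ℂ} (hw : 0 < w.im) : Continuous fun τ : ℝ => 1 + (τ : ℂ) * w := by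
  continuity

lemma cont_div {w : ℂ} (hw : 0 < w.im) {u : ℝ → ℂ} (hu : Continuous u) :
    Continuous fun τ : ℝ => u τ / (1 + (τ : ℂ) * w) :=
  hu.div (cont_denom hw) (fun τ => denom_ne_zero hw τ)

variable {c T : ℝ} {σ : Measure ℝ} {f : ℂ → ℂ}

lemma im_f_pos (hσp : IsProbabilityMeasure σ)
    (heq : ∀ z : ℂ, z.im ≠ 0 →
      z * f z = -1 + (c : ℂ) - ∫ t, (c : ℂ) / (1 + (t : ℂ) * f z) ∂σ)
    (hherg : ∀ z : ℂ, z.im ≠ 0 → 0 ≤ (f z).im * z.im)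
    {z : ℂ} (hz : 0 < z.im) : 0 < (f z).im := by
  have h0 : 0 ≤ (f z).im := by nlinarith [hherg z hz.ne']
  rcases h0.lt_or_eq with h | h
  · exact h
  · exfalso
    -- f z is real
    have hreal : f z = ((f z).re : ℂ) := by
      apply Complex.ext <;> simp [← h]
    set a : ℝ := (f z).re with ha
    have hint : ∀ t : ℝ, (c : ℂ) / (1 + (t : ℂ) * f z) = ((c / (1 + t * a) : ℝ) : ℂ) := by
      intro t
      rw [hreal]
      push_cast
      ring_nf
    have hieq := heq z hz.ne'
    rw [show (fun t : ℝ => (c : ℂ) / (1 + (t : ℂ) * f z)) = fun t : ℝ =>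
        ((c / (1 + t * a) : ℝ) : ℂ) from funext hint] at hieq
    rw [show (∫ t : ℝ, ((c / (1 + t * a) : ℝ) : ℂ) ∂σ) = ((∫ t : ℝ, c / (1 + t * a) ∂σ : ℝ) : ℂ) from integral_ofReal, hreal] at hieq
    have him := congrArg Complex.im hieq
    simp [Complex.mul_im] at him
    -- him : z.im * a = 0 (in some form)
    have ha0 : a = 0 := by
      rcases him with h1 | h1
      · exact absurd h1 hz.ne'
      · exact h1
    have hfz : f z = 0 := by rw [hreal, ha0]; simp
    have h2 := heq z hz.ne'
    rw [hfz] at h2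
    simp [integral_const, measure_univ] at h2

lemma eq2 (hσp : IsProbabilityMeasure σ) (hσs : σ (Set.Icc (0 : ℝ) T)ᶜ = 0)
    (heq : ∀ z : ℂ, z.im ≠ 0 →
      z * f z = -1 + (c : ℂ) - ∫ t, (c : ℂ) / (1 + (t : ℂ) * f z) ∂σ)
    {z : ℂ} (hz : 0 < z.im) (hw : 0 < (f z).im) :
    z = -1 / f z + ∫ t, (c : ℂ) * (t : ℂ) / (1 + (t : ℂ) * f z) ∂σ := by
  set w := f z with hwdef
  have hw0 : w ≠ 0 := fun h => by simp [h] at hw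
  have hint1 : Integrable (fun t : ℝ => (c : ℂ) / (1 + (t : ℂ) * w)) σ :=
    aux_integrable hσs (cont_div hw continuous_const)
  have h1 : ∫ t : ℝ, ((c : ℂ) - (c : ℂ) / (1 + (t : ℂ) * w)) ∂σ
      = (c : ℂ) - ∫ t : ℝ, (c : ℂ) / (1 + (t : ℂ) * w) ∂σ := by
    rw [integral_sub (integrable_const _) hint1]
    simp [integral_const, measure_univ]
  have h2 : ∀ t : ℝ, (c : ℂ) - (c : ℂ) / (1 + (t : ℂ) * w)
      = w * ((c : ℂ) * (t : ℂ) / (1 + (t : ℂ) * w)) := by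
    intro t
    have hd := denom_ne_zero hw t
    field_simp
    ring
  have h3 : ∫ t : ℝ, ((c : ℂ) - (c : ℂ) / (1 + (t : ℂ) * w)) ∂σ
      = w * ∫ t : ℝ, (c : ℂ) * (t : ℂ) / (1 + (t : ℂ) * w) ∂σ := by
    rw [show (fun t : ℝ => (c : ℂ) - (c : ℂ) / (1 + (t : ℂ) * w)) = fun t : ℝ =>
        w * ((c : ℂ) * (t : ℂ) / (1 + (t : ℂ) * w)) from funext h2]
    exact integral_const_mul w _
  have key : z * w = -1 + w * ∫ t : ℝ, (c : ℂ) * (t : ℂ) / (1 + (t : ℂ) * w) ∂σ := by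
    rw [heq z hz.ne']
    rw [← h3, h1]
    ring
  rw [div_add' _ _ _ hw0, eq_div_iff hw0]
  linear_combination key

lemma abs_f_le (hc : 0 < c) (hσp : IsProbabilityMeasure σ)
    (hσs : σ (Set.Icc (0 : ℝ) T)ᶜ = 0)
    (heq : ∀ z : ℂ, z.im ≠ 0 →
      z * f z = -1 + (c : ℂ) - ∫ t, (c : ℂ) / (1 + (t : ℂ) * f z) ∂σ)
    {z : ℂ} (hz : 0 < z.im) (hw : 0 < (f z).im) :
    ‖f z‖ ≤ 1 / z.im := by
  set w := f z with hwdef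
  have hw0 : w ≠ 0 := fun h => by simp [h] at hw
  have he := eq2 hσp hσs heq hz hw
  have hae : ∀ᵐ t ∂σ, t ∈ Set.Icc (0:ℝ) T := by
    rw [Filter.eventually_iff, mem_ae_iff]; rwa [Set.compl_setOf]
  have hintg : Integrable (fun t : ℝ => (c : ℂ) * (t : ℂ) / (1 + (t : ℂ) * w)) σ :=
    aux_integrable hσs (cont_div hw (continuous_const.mul Complex.continuous_ofReal))
  have him : (∫ t : ℝ, (c : ℂ) * (t : ℂ) / (1 + (t : ℂ) * w) ∂σ).im
      = ∫ t : ℝ, ((c : ℂ) * (t : ℂ) / (1 + (t : ℂ) * w)).im ∂σ := by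
    have := Complex.imCLM.integral_comp_comm hintg
    simpa using this.symm
  have hptle : ∀ t ∈ Set.Icc (0:ℝ) T, ((c : ℂ) * (t : ℂ) / (1 + (t : ℂ) * w)).im ≤ 0 := by
    intro t ht
    have hd := denom_ne_zero hw t
    have hdim : (1 + (t : ℂ) * w).im = t * w.im := by simp
    have hval : ((c : ℂ) * (t : ℂ) / (1 + (t : ℂ) * w)).im
        = (c * t) * (-(t * w.im) / Complex.normSq (1 + (t : ℂ) * w)) := by
      rw [div_eq_mul_inv, ← Complex.ofReal_mul, Complex.im_ofReal_mul, Complex.inv_im, hdim]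
    rw [hval, neg_div, mul_neg]
    have h1 : 0 ≤ (c * t) * ((t * w.im) / Complex.normSq (1 + (t : ℂ) * w)) := by
      have := Complex.normSq_nonneg (1 + (t : ℂ) * w)
      have := ht.1
      positivity
    linarith [h1]
  have hile : (∫ t : ℝ, (c : ℂ) * (t : ℂ) / (1 + (t : ℂ) * w) ∂σ).im ≤ 0 := by
    rw [him]
    apply integral_nonpos_of_ae
    filter_upwards [hae] with t ht using hptle t ht
  have hzim : z.im ≤ w.im / Complex.normSq w := by
    have h6 := congrArg Complex.im he
    rw [Complex.add_im] at h6
    have h7 : (-1 / w).im = w.im / Complex.normSq w := by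
      rw [neg_div, Complex.neg_im, one_div, Complex.inv_im]
      ring
    rw [h7] at h6
    rw [← hwdef] at h6
    linarith [h6.le, hile, h6.ge]
  have habs : 0 < ‖w‖ := by
    simpa using norm_pos_iff.mpr hw0
  have hns : Complex.normSq w = ‖w‖ ^ 2 := by
    rw [Complex.sq_norm]
  have h8 : z.im * ‖w‖ ^ 2 ≤ ‖w‖ := by
    have h9 : w.im ≤ ‖w‖ := Complex.im_le_norm w
    rw [hns] at hzim
    have hpos : (0:ℝ) < ‖w‖ ^ 2 := by positivity
    calc z.im * ‖w‖ ^ 2 ≤ (w.im / ‖w‖ ^ 2) * ‖w‖ ^ 2 := by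
          exact mul_le_mul_of_nonneg_right hzim hpos.le
      _ = w.im := by field_simp
      _ ≤ ‖w‖ := h9
  rw [le_div_iff₀ hz]
  nlinarith [h8, habs]

lemma denom_lb (hc : 0 < c) (hT : 0 < T) {z : ℂ} (hz : 2 * T * (c + 1) < z.im)
    (habs : ‖f z‖ ≤ 1 / z.im) {t : ℝ} (ht : t ∈ Set.Icc (0:ℝ) T) :
    (1:ℝ) / 2 ≤ ‖1 + (t : ℂ) * f z‖ := by
  have h0 : (0:ℝ) < 2 * T * (c + 1) := by positivity
  have hz0 : 0 < z.im := h0.trans hz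
  have h1 : ‖f z‖ ≤ 1 / (2 * T * (c + 1)) :=
    habs.trans (one_div_le_one_div_of_le h0 hz.le)
  have h2 : ‖(t : ℂ) * f z‖ ≤ (1:ℝ) / 2 := by
    rw [norm_mul, Complex.norm_real, Real.norm_eq_abs, abs_of_nonneg ht.1]
    have h3 : t * ‖f z‖ ≤ T * (1 / (2 * T * (c + 1))) :=
      mul_le_mul ht.2 h1 (norm_nonneg _) hT.le
    have h4 : T * (1 / (2 * T * (c + 1))) ≤ 1 / 2 := by
      rw [mul_one_div, div_le_div_iff₀ (by positivity) two_pos]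
      nlinarith
    linarith
  have htri := norm_add_le (1 + (t : ℂ) * f z) (-((t : ℂ) * f z))
  simp only [add_neg_cancel_right, norm_one, norm_neg] at htri
  linarith

lemma key3 (hc : 0 < c) (hT : 0 < T) (hσp : IsProbabilityMeasure σ)
    (hσs : σ (Set.Icc (0 : ℝ) T)ᶜ = 0)
    (heq : ∀ z : ℂ, z.im ≠ 0 →
      z * f z = -1 + (c : ℂ) - ∫ t, (c : ℂ) / (1 + (t : ℂ) * f z) ∂σ)
    {z1 z2 : ℂ} (h1 : 2 * T * (c + 1) < z1.im) (h2 : 2 * T * (c + 1) < z2.im)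
    (hw1 : 0 < (f z1).im) (hw2 : 0 < (f z2).im) :
    z1 - z2 = (f z1 - f z2) * (1 / (f z1 * f z2) -
      ∫ t, (c : ℂ) * (t : ℂ) ^ 2 / ((1 + (t : ℂ) * f z1) * (1 + (t : ℂ) * f z2)) ∂σ) := by
  have h0 : (0:ℝ) < 2 * T * (c + 1) := by positivity
  have hz1 : 0 < z1.im := h0.trans h1
  have hz2 : 0 < z2.im := h0.trans h2
  have hf1 : f z1 ≠ 0 := fun h => by simp [h] at hw1
  have hf2 : f z2 ≠ 0 := fun h => by simp [h] at hw2
  have he1 := eq2 hσp hσs heq hz1 hw1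
  have he2 := eq2 hσp hσs heq hz2 hw2
  have hcont : Continuous fun t : ℝ => (c : ℂ) * (t : ℂ) :=
    continuous_const.mul Complex.continuous_ofReal
  have hI1 : Integrable (fun t : ℝ => (c : ℂ) * (t : ℂ) / (1 + (t : ℂ) * f z1)) σ :=
    aux_integrable hσs (cont_div hw1 hcont)
  have hI2 : Integrable (fun t : ℝ => (c : ℂ) * (t : ℂ) / (1 + (t : ℂ) * f z2)) σ :=
    aux_integrable hσs (cont_div hw2 hcont)
  have B : (∫ t, (c : ℂ) * (t : ℂ) / (1 + (t : ℂ) * f z1) ∂σ)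
      - (∫ t, (c : ℂ) * (t : ℂ) / (1 + (t : ℂ) * f z2) ∂σ)
      = ∫ t, ((c : ℂ) * (t : ℂ) / (1 + (t : ℂ) * f z1)
          - (c : ℂ) * (t : ℂ) / (1 + (t : ℂ) * f z2)) ∂σ :=
    (integral_sub hI1 hI2).symm
  have hpt : (fun t : ℝ => ((c : ℂ) * (t : ℂ) / (1 + (t : ℂ) * f z1)
          - (c : ℂ) * (t : ℂ) / (1 + (t : ℂ) * f z2)))
      = fun t : ℝ => (f z1 - f z2) *
          (-((c : ℂ) * (t : ℂ) ^ 2 / ((1 + (t : ℂ) * f z1) * (1 + (t : ℂ) * f z2)))) := by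
    funext t
    have d1 := denom_ne_zero hw1 t
    have d2 := denom_ne_zero hw2 t
    field_simp
    ring
  have A : (∫ t, ((c : ℂ) * (t : ℂ) / (1 + (t : ℂ) * f z1)
          - (c : ℂ) * (t : ℂ) / (1 + (t : ℂ) * f z2)) ∂σ)
      = (f z1 - f z2) *
        (-(∫ t, (c : ℂ) * (t : ℂ) ^ 2 / ((1 + (t : ℂ) * f z1) * (1 + (t : ℂ) * f z2)) ∂σ)) := by
    rw [hpt, integral_const_mul]
    rw [integral_neg]
  have C : -1 / f z1 + 1 / f z2 = (f z1 - f z2) * (1 / (f z1 * f z2)) := by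
    field_simp
    ring
  linear_combination he1 - he2 + B + A + C

lemma aux_integrableR {T : ℝ} {σ : Measure ℝ} [IsFiniteMeasure σ]
    (hσs : σ (Set.Icc (0 : ℝ) T)ᶜ = 0) {g : ℝ → ℝ} (hg : Continuous g) :
    Integrable g σ := by
  rw [← aux_restrict hσs]
  exact (hg.continuousOn).integrableOn_compact isCompact_Icc

/-- (3.5): identities for the limiting Stieltjes transform `f`:
`(∫ cτ dσ(τ)/(1+τf(z))² − z)⁻¹ = f'(z)/f(z)` and
`Δz/Δf = 1/(f(z₁)f(z₂)) − ∫ cτ² dσ(τ)/((1+τf(z₁))(1+τf(z₂)))`. -/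
theorem stieltjes_transform_identities (c T : ℝ) (hc : 0 < c) (hT : 0 < T)
    (σ : Measure ℝ) (hσp : IsProbabilityMeasure σ) (hσs : σ (Set.Icc (0 : ℝ) T)ᶜ = 0)
    (f : ℂ → ℂ) (hf : IsStieltjesLimit c σ f) :
    ∀ z z1 z2 : ℂ, 2 * T * (c + 1) < z.im → 2 * T * (c + 1) < z1.im →
      2 * T * (c + 1) < z2.im → z1 ≠ z2 →
        ((∫ t, (c : ℂ) * (t : ℂ) / (1 + (t : ℂ) * f z) ^ 2 ∂σ) - z)⁻¹ =
          deriv f z / f z ∧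
        (z1 - z2) / (f z1 - f z2) =
          1 / (f z1 * f z2) - ∫ t, (c : ℂ) * (t : ℂ) ^ 2 /
            ((1 + (t : ℂ) * f z1) * (1 + (t : ℂ) * f z2)) ∂σ := by
  obtain ⟨hdiff, hherg, heq⟩ := hf
  have h0 : (0:ℝ) < 2 * T * (c + 1) := by positivity
  intro z z1 z2 hz hz1 hz2 hne
  have hzp : 0 < z.im := h0.trans hz
  have hz1p : 0 < z1.im := h0.trans hz1
  have hz2p : 0 < z2.im := h0.trans hz2
  have hwz : 0 < (f z).im := im_f_pos hσp heq hherg hzp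
  have hwz1 : 0 < (f z1).im := im_f_pos hσp heq hherg hz1p
  have hwz2 : 0 < (f z2).im := im_f_pos hσp heq hherg hz2p
  have hfz : f z ≠ 0 := fun h => by simp [h] at hwz
  constructor
  · -- part (i)
    set G2 : ℂ → ℂ := fun w => 1 / (f w * f z) -
      ∫ t, (c : ℂ) * (t : ℂ) ^ 2 / ((1 + (t : ℂ) * f w) * (1 + (t : ℂ) * f z)) ∂σ with hG2
    have hUopen : IsOpen {w : ℂ | 2 * T * (c + 1) < w.im} :=
      isOpen_lt continuous_const Complex.continuous_im
    have hVopen : IsOpen {w : ℂ | w.im ≠ 0} :=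
      isOpen_ne_fun Complex.continuous_im continuous_const
    have hfd : DifferentiableAt ℂ f z :=
      hdiff.differentiableAt (hVopen.mem_nhds hzp.ne')
    have hfc : ContinuousAt f z := hfd.continuousAt
    have hcont : Continuous fun t : ℝ => (c : ℂ) * (t : ℂ) :=
      continuous_const.mul Complex.continuous_ofReal
    have hT1 : Filter.Tendsto (fun w => 1 / (f w * f z)) (𝓝[≠] z) (𝓝 (1 / (f z * f z))) := by
      apply Filter.Tendsto.mono_left _ nhdsWithin_le_nhds
      exact tendsto_const_nhds.div (hfc.tendsto.mul tendsto_const_nhds) (mul_ne_zero hfz hfz)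
    have habsw : ∀ w : ℂ, 2 * T * (c + 1) < w.im → ∀ t ∈ Set.Icc (0:ℝ) T,
        (1:ℝ)/2 ≤ ‖1 + (t : ℂ) * f w‖ := fun w hw t htm =>
      denom_lb hc hT hw (abs_f_le hc hσp hσs heq (h0.trans hw)
        (im_f_pos hσp heq hherg (h0.trans hw))) htm
    have hae : ∀ᵐ t ∂σ, t ∈ Set.Icc (0:ℝ) T := by
      rw [Filter.eventually_iff, mem_ae_iff]; rwa [Set.compl_setOf]
    have hevU : ∀ᶠ w in 𝓝[≠] z, 2 * T * (c + 1) < w.im :=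
      Filter.Eventually.filter_mono nhdsWithin_le_nhds (hUopen.eventually_mem hz)
    have hT2 : Filter.Tendsto (fun w => ∫ t, (c : ℂ) * (t : ℂ) ^ 2 /
          ((1 + (t : ℂ) * f w) * (1 + (t : ℂ) * f z)) ∂σ)
        (𝓝[≠] z) (𝓝 (∫ t, (c : ℂ) * (t : ℂ) ^ 2 /
          ((1 + (t : ℂ) * f z) * (1 + (t : ℂ) * f z)) ∂σ)) := by
      apply tendsto_integral_filter_of_dominated_convergence (fun t : ℝ => 4 * c * t ^ 2)
      · filter_upwards [hevU] with w hw
        apply Continuous.aestronglyMeasurable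
        have hwim : 0 < (f w).im := im_f_pos hσp heq hherg (h0.trans hw)
        exact (continuous_const.mul (Complex.continuous_ofReal.pow 2)).div
          ((cont_denom hwim).mul (cont_denom hwz))
          (fun t => mul_ne_zero (denom_ne_zero hwim t) (denom_ne_zero hwz t))
      · filter_upwards [hevU] with w hw
        filter_upwards [hae] with t htm
        have l1 := habsw w hw t htm
        have l2 := habsw z hz t htm
        have hnrm : ‖(c : ℂ) * (t : ℂ) ^ 2 / ((1 + (t : ℂ) * f w) * (1 + (t : ℂ) * f z))‖
            = (c * t ^ 2) / (‖1 + (t : ℂ) * f w‖ * ‖1 + (t : ℂ) * f z‖) := by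
          rw [norm_div, norm_mul, norm_mul, norm_pow]
          simp [Complex.norm_real, abs_of_pos hc, sq_abs]
        rw [hnrm]
        have hq : (1:ℝ)/4 ≤ ‖1 + (t : ℂ) * f w‖ * ‖1 + (t : ℂ) * f z‖ := by
          nlinarith [norm_nonneg (1 + (t : ℂ) * f w), norm_nonneg (1 + (t : ℂ) * f z)]
        have hnn : (0:ℝ) ≤ c * t ^ 2 := by positivity
        calc (c * t ^ 2) / (‖1 + (t : ℂ) * f w‖ * ‖1 + (t : ℂ) * f z‖)
            ≤ (c * t ^ 2) / (1/4) := by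
              apply div_le_div_of_nonneg_left hnn (by norm_num) hq
          _ = 4 * c * t ^ 2 := by ring
      · exact aux_integrableR hσs (by continuity)
      · apply Filter.Eventually.of_forall
        intro t
        apply Filter.Tendsto.mono_left _ nhdsWithin_le_nhds
        apply Filter.Tendsto.div tendsto_const_nhds
        · exact ((tendsto_const_nhds.add (tendsto_const_nhds.mul hfc.tendsto)).mul
            tendsto_const_nhds)
        · exact mul_ne_zero (denom_ne_zero hwz t) (denom_ne_zero hwz t)
    have hG2t : Filter.Tendsto G2 (𝓝[≠] z) (𝓝 (G2 z)) := hT1.sub hT2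
    have hslope : Filter.Tendsto (fun w => (f w - f z) / (w - z)) (𝓝[≠] z)
        (𝓝 (deriv f z)) := by
      have h := hfd.hasDerivAt
      rw [hasDerivAt_iff_tendsto_slope] at h
      have : (slope f z) = fun w => (f w - f z) / (w - z) := by
        funext w; rw [slope_def_field]
      rwa [this] at h
    have hprod : Filter.Tendsto (fun w => ((f w - f z) / (w - z)) * G2 w) (𝓝[≠] z)
        (𝓝 (deriv f z * G2 z)) := hslope.mul hG2t
    have hone_ev : ∀ᶠ w in 𝓝[≠] z, ((f w - f z) / (w - z)) * G2 w = 1 := by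
      filter_upwards [hevU, self_mem_nhdsWithin] with w hwU hwne
      have hk := key3 hc hT hσp hσs heq hwU hz (im_f_pos hσp heq hherg (h0.trans hwU)) hwz
      have hwzne : w - z ≠ 0 := sub_ne_zero.mpr hwne
      rw [div_mul_eq_mul_div, ← hk, div_self hwzne]
    have hone : deriv f z * G2 z = 1 :=
      tendsto_nhds_unique ((Filter.tendsto_congr' hone_ev).mp hprod) tendsto_const_nhds
    have hG2ne : G2 z ≠ 0 := by
      intro h; rw [h, mul_zero] at hone; exact zero_ne_one hone
    have hderiv_eq : deriv f z = (G2 z)⁻¹ :=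
      eq_inv_of_mul_eq_one_left (by linear_combination hone)
    have hIq : Integrable (fun t : ℝ => (c : ℂ) * (t : ℂ) / (1 + (t : ℂ) * f z) ^ 2) σ :=
      aux_integrable hσs (hcont.div ((cont_denom hwz).pow 2)
        (fun t => pow_ne_zero 2 (denom_ne_zero hwz t)))
    have hIl : Integrable (fun t : ℝ => (c : ℂ) * (t : ℂ) / (1 + (t : ℂ) * f z)) σ :=
      aux_integrable hσs (cont_div hwz hcont)
    have e1 := eq2 hσp hσs heq hzp hwz
    have e2 : (∫ t, (c : ℂ) * (t : ℂ) / (1 + (t : ℂ) * f z) ^ 2 ∂σ)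
        - (∫ t, (c : ℂ) * (t : ℂ) / (1 + (t : ℂ) * f z) ∂σ)
        = ∫ t, ((c : ℂ) * (t : ℂ) / (1 + (t : ℂ) * f z) ^ 2
            - (c : ℂ) * (t : ℂ) / (1 + (t : ℂ) * f z)) ∂σ := (integral_sub hIq hIl).symm
    have hpt2 : (fun t : ℝ => ((c : ℂ) * (t : ℂ) / (1 + (t : ℂ) * f z) ^ 2
            - (c : ℂ) * (t : ℂ) / (1 + (t : ℂ) * f z)))
        = fun t : ℝ => f z * (-((c : ℂ) * (t : ℂ) ^ 2 /
            ((1 + (t : ℂ) * f z) * (1 + (t : ℂ) * f z)))) := by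
      funext t
      have hd := denom_ne_zero hwz t
      field_simp
      ring
    have e3 : (∫ t, ((c : ℂ) * (t : ℂ) / (1 + (t : ℂ) * f z) ^ 2
            - (c : ℂ) * (t : ℂ) / (1 + (t : ℂ) * f z)) ∂σ)
        = f z * (-(∫ t, (c : ℂ) * (t : ℂ) ^ 2 /
            ((1 + (t : ℂ) * f z) * (1 + (t : ℂ) * f z)) ∂σ)) := by
      rw [hpt2, integral_const_mul, integral_neg]
    have e4 : 1 / f z = f z * (1 / (f z * f z)) := by field_simp
    have E : (∫ t, (c : ℂ) * (t : ℂ) / (1 + (t : ℂ) * f z) ^ 2 ∂σ) - z = f z * G2 z := by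
      rw [hG2]
      linear_combination -e1 + e2 + e3 + e4
    rw [E, mul_inv, ← hderiv_eq]
    ring
  · -- part (ii)
    have hk := key3 hc hT hσp hσs heq hz1 hz2 hwz1 hwz2
    have hfne : f z1 - f z2 ≠ 0 := by
      intro h
      apply hne
      have h2 : z1 - z2 = 0 := by rw [hk, h, zero_mul]
      exact sub_eq_zero.mp h2
    rw [hk, mul_comm, mul_div_assoc, div_self hfne, mul_one]
end
end
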